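/- Let d ≥ 2 be an integer, n : ℕ, and p ∈ [0,1]. For every PPT POVM element E on the n-copy space, the (real) error probability satisfies Re(p · Tr(E · σ_d^{⊗n}) + (1−p) · Tr((1 − E) · α_d^{⊗n})) ≥ min(p · ((d−1)/(d+1))^n, 1−p). -/

import Mathlib

open Matrix Finset
open scoped BigOperators Kronecker ComplexOrder

noncomputable section

/-- The flip (swap) operator on `ℂ^d ⊗ ℂ^d`. -/
def Flip (d : ℕ) : Matrix (Fin d × Fin d) (Fin d × Fin d) ℂ :=
  Matrix.of fun p q => if p.1 = q.2 ∧ p.2 = q.1 then 1 else 0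

/-- Projection onto the symmetric subspace, `Π_s = (1 + F)/2`. -/
def projSym (d : ℕ) : Matrix (Fin d × Fin d) (Fin d × Fin d) ℂ :=
  (2 : ℂ)⁻¹ • (1 + Flip d)

/-- Projection onto the antisymmetric subspace, `Π_a = (1 - F)/2`. -/
def projAsym (d : ℕ) : Matrix (Fin d × Fin d) (Fin d × Fin d) ℂ :=
  (2 : ℂ)⁻¹ • (1 - Flip d)

/-- The symmetric Werner state `σ_d = (2/(d(d+1))) • Π_s`. -/
def wernerSym (d : ℕ) : Matrix (Fin d × Fin d) (Fin d × Fin d) ℂ :=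
  (2 / ((d : ℂ) * ((d : ℂ) + 1))) • projSym d

/-- The antisymmetric Werner state `α_d = (2/(d(d-1))) • Π_a`. -/
def wernerAsym (d : ℕ) : Matrix (Fin d × Fin d) (Fin d × Fin d) ℂ :=
  (2 / ((d : ℂ) * ((d : ℂ) - 1))) • projAsym d

/-- The POVM element `G_d`: diagonal, with `(i,j),(i,j)` entry `1` iff `i ≠ j`. -/
def Gmat (d : ℕ) : Matrix (Fin d × Fin d) (Fin d × Fin d) ℂ :=
  Matrix.diagonal fun p => if p.1 ≠ p.2 then 1 else 0

/-- `n`-fold tensor power of a matrix on `ℂ^d ⊗ ℂ^d`. -/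
def tpow {d : ℕ} (n : ℕ) (X : Matrix (Fin d × Fin d) (Fin d × Fin d) ℂ) :
    Matrix (Fin n → Fin d × Fin d) (Fin n → Fin d × Fin d) ℂ :=
  Matrix.of fun f g => ∏ m, X (f m) (g m)

/-- The twirled single-copy POVM element `M_d = ((d-1)/(d+1)) • Π_s + Π_a`. -/
def MdMat (d : ℕ) : Matrix (Fin d × Fin d) (Fin d × Fin d) ℂ :=
  (((d : ℂ) - 1) / ((d : ℂ) + 1)) • projSym d + projAsym d

/-- `A_k`: sum over all `k`-element subsets `S` of the copies of the tensor product with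
`Π_a` on copies in `S` and `Π_s` elsewhere. -/
def Amat (d n k : ℕ) : Matrix (Fin n → Fin d × Fin d) (Fin n → Fin d × Fin d) ℂ :=
  ∑ S ∈ Finset.powersetCard k (Finset.univ : Finset (Fin n)),
    Matrix.of fun f g => ∏ m, (if m ∈ S then projAsym d else projSym d) (f m) (g m)

/-- Partial transpose on `ℂ^d ⊗ ℂ^d`. -/
def pt {d : ℕ} (X : Matrix (Fin d × Fin d) (Fin d × Fin d) ℂ) :
    Matrix (Fin d × Fin d) (Fin d × Fin d) ℂ :=
  Matrix.of fun p q => X (p.1, q.2) (q.1, p.2)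

/-- The maximally entangled state `Φ_d`. -/
def Phi (d : ℕ) : Matrix (Fin d × Fin d) (Fin d × Fin d) ℂ :=
  Matrix.of fun p q => if p.1 = p.2 ∧ q.1 = q.2 then ((d : ℂ))⁻¹ else 0

/-- `n`-copy partial transpose. -/
def ptN {d n : ℕ} (Y : Matrix (Fin n → Fin d × Fin d) (Fin n → Fin d × Fin d) ℂ) :
    Matrix (Fin n → Fin d × Fin d) (Fin n → Fin d × Fin d) ℂ :=
  Matrix.of fun f g => Y (fun m => ((f m).1, (g m).2)) (fun m => ((g m).1, (f m).2))

/-- `T_l`: sum over all `l`-element subsets `S` of the copies of the tensor product with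
`Φ_d` on copies in `S` and `1 - Φ_d` elsewhere. -/
def Tmat (d n l : ℕ) : Matrix (Fin n → Fin d × Fin d) (Fin n → Fin d × Fin d) ℂ :=
  ∑ S ∈ Finset.powersetCard l (Finset.univ : Finset (Fin n)),
    Matrix.of fun f g => ∏ m, (if m ∈ S then Phi d else (1 - Phi d)) (f m) (g m)

/-- The matrix `Q` of the linear program: `Q l k = Σ_{j=0}^{min(l,k)}
(n−l choose k−j)(l choose j)(1−d)^j (1+d)^{l−j}`. -/
def Qmat (n : ℕ) (d : ℝ) (l k : ℕ) : ℝ :=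
  ∑ j ∈ Finset.range (min l k + 1),
    ((n - l).choose (k - j) : ℝ) * (l.choose j : ℝ) * (1 - d) ^ j * (1 + d) ^ (l - j)

/-- A PPT POVM element on the `n`-copy space: `E`, `1 - E`, `E^Γ`, `(1-E)^Γ` all PSD. -/
def IsPPTPovmElem {d n : ℕ}
    (E : Matrix (Fin n → Fin d × Fin d) (Fin n → Fin d × Fin d) ℂ) : Prop :=
  E.PosSemidef ∧ (1 - E).PosSemidef ∧ (ptN E).PosSemidef ∧ (ptN (1 - E)).PosSemidef

/-- Error probability for discriminating `σ_d^{⊗n}` (prior `p`) from `α_d^{⊗n}`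
(prior `1-p`) with the two-outcome POVM `{E, 1 - E}`. -/
def errProb (d n : ℕ) (p : ℝ)
    (E : Matrix (Fin n → Fin d × Fin d) (Fin n → Fin d × Fin d) ℂ) : ℝ :=
  ((p : ℂ) * (E * tpow n (wernerSym d)).trace
    + (1 - (p : ℂ)) * ((1 - E) * tpow n (wernerAsym d)).trace).re

/-- Separability of a bipartite matrix. -/
def IsSep {I J : Type*} [Fintype I] [Fintype J]
    (W : Matrix (I × J) (I × J) ℂ) : Prop :=
  ∃ (m : ℕ) (A : Fin m → Matrix I I ℂ) (B : Fin m → Matrix J J ℂ),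
    (∀ i, (A i).PosSemidef) ∧ (∀ i, (B i).PosSemidef) ∧ W = ∑ i, A i ⊗ₖ B i

/-- Trace norm `‖X‖₁ = Tr √(Xᴴ X)`. -/
def traceNorm {ι : Type*} [Fintype ι] [DecidableEq ι] (X : Matrix ι ι ℂ) : ℝ :=
  ((Matrix.posSemidef_conjTranspose_mul_self X).1.eigenvectorUnitary.1 *
      Matrix.diagonal (((↑) : ℝ → ℂ) ∘ Real.sqrt ∘ (Matrix.posSemidef_conjTranspose_mul_self X).1.eigenvalues) *
      (star (Matrix.posSemidef_conjTranspose_mul_self X).1.eigenvectorUnitary : Matrix ι ι ℂ)).trace.re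

/-- Frobenius (Hilbert–Schmidt) norm `‖X‖₂ = √(Tr (Xᴴ X))`. -/
def frobNorm {ι : Type*} [Fintype ι] (X : Matrix ι ι ℂ) : ℝ :=
  Real.sqrt ((Xᴴ * X).trace.re)

-- ===== auxiliary lemmas =====
section Aux
open scoped ComplexOrder

lemma psd_exists_sqrt {ι : Type*} [Fintype ι] [DecidableEq ι] {A : Matrix ι ι ℂ}
    (hA : A.PosSemidef) : ∃ R : Matrix ι ι ℂ, R.PosSemidef ∧ R * R = A := by
  open scoped MatrixOrder in
  exact ⟨CFC.sqrt A, (CFC.sqrt_nonneg A).posSemidef, CFC.sqrt_mul_sqrt_self A hA.nonneg⟩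

lemma psd_diag_nonneg {ι : Type*} [Fintype ι] [DecidableEq ι] {A : Matrix ι ι ℂ}
    (hA : A.PosSemidef) (i : ι) : 0 ≤ A i i := by
  have h := hA.dotProduct_mulVec_nonneg (Pi.single i 1)
  have h2 : star (Pi.single i (1:ℂ)) ⬝ᵥ A *ᵥ Pi.single i 1 = A i i := by
    simp [Matrix.mulVec_single, dotProduct, Pi.single_apply, apply_ite, Finset.sum_ite_eq]
  rwa [h2] at h

lemma psd_trace_re_nonneg' {ι : Type*} [Fintype ι] [DecidableEq ι] {A : Matrix ι ι ℂ}
    (hA : A.PosSemidef) : 0 ≤ A.trace.re := by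
  rw [Matrix.trace, Complex.re_sum]
  exact Finset.sum_nonneg fun i _ => (Complex.nonneg_iff.mp (psd_diag_nonneg hA i)).1

lemma psd_trace_mul_re_nonneg {ι : Type*} [Fintype ι] [DecidableEq ι] {A B : Matrix ι ι ℂ}
    (hA : A.PosSemidef) (hB : B.PosSemidef) : 0 ≤ (A * B).trace.re := by
  obtain ⟨S, hSpsd, hSS⟩ := psd_exists_sqrt hA
  have h1 : A * B = S * (S * B) := by
    rw [← Matrix.mul_assoc, hSS]
  have h2 : (A * B).trace = (S * B * Sᴴ).trace := by
    rw [h1, Matrix.trace_mul_comm, hSpsd.1.eq, Matrix.mul_assoc]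
  rw [h2]
  exact psd_trace_re_nonneg' (hB.mul_mul_conjTranspose_same S)

lemma psd_smul_real {ι : Type*} [Fintype ι] {A : Matrix ι ι ℂ}
    (hA : A.PosSemidef) {c : ℝ} (hc : 0 ≤ c) : ((c : ℂ) • A).PosSemidef := by
  refine Matrix.PosSemidef.of_dotProduct_mulVec_nonneg ?_ ?_
  · unfold Matrix.IsHermitian
    rw [Matrix.conjTranspose_smul, hA.1.eq]
    congr 1
    simp [Complex.conj_ofReal]
  · intro x
    have h := hA.dotProduct_mulVec_nonneg x
    have heq : star x ⬝ᵥ ((c : ℂ) • A) *ᵥ x = (c : ℂ) * (star x ⬝ᵥ A *ᵥ x) := by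
      rw [Matrix.smul_mulVec, dotProduct_smul, smul_eq_mul]
    rw [heq]
    exact mul_nonneg (by exact_mod_cast Complex.zero_le_real.mpr hc) h

lemma psd_sum {β : Type*} {ι : Type*} [Fintype ι] (s : Finset β) (f : β → Matrix ι ι ℂ)
    (h : ∀ b ∈ s, (f b).PosSemidef) : (∑ b ∈ s, f b).PosSemidef := by
  classical
  induction s using Finset.induction with
  | empty => simpa using Matrix.PosSemidef.zero
  | insert a s hb ih =>
    rw [Finset.sum_insert hb]
    exact (h a (Finset.mem_insert_self a s)).add (ih fun b hbs => h b (Finset.mem_insert_of_mem hbs))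

lemma tpow_family_psd {ι : Type*} [Fintype ι] [DecidableEq ι] {n : ℕ}
    (M : Fin n → Matrix ι ι ℂ) (hM : ∀ m, (M m).PosSemidef) :
    (Matrix.of fun f g : Fin n → ι => ∏ m, M m (f m) (g m)).PosSemidef := by
  choose R hR using fun m => psd_exists_sqrt (hM m)
  have hRM : ∀ m, (R m)ᴴ * R m = M m := fun m => by
    rw [(hR m).1.1.eq, (hR m).2]
  set W : Matrix (Fin n → ι) (Fin n → ι) ℂ :=
    Matrix.of (fun κ f : Fin n → ι => ∏ m, R m (κ m) (f m)) with hW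
  have key : Wᴴ * W = Matrix.of fun f g : Fin n → ι => ∏ m, M m (f m) (g m) := by
    ext f g
    simp only [Matrix.mul_apply, Matrix.conjTranspose_apply, hW, Matrix.of_apply]
    have hs : ∀ κ : Fin n → ι,
        star (∏ m, R m (κ m) (f m)) * ∏ m, R m (κ m) (g m)
          = ∏ m, star (R m (κ m) (f m)) * R m (κ m) (g m) := by
      intro κ
      rw [star_prod, ← Finset.prod_mul_distrib]
    simp_rw [hs]
    have hpu := Finset.prod_univ_sum (fun _ : Fin n => (Finset.univ : Finset ι))
      (fun m k => star (R m k (f m)) * R m k (g m))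
    rw [Fintype.piFinset_univ] at hpu
    rw [← hpu]
    refine Finset.prod_congr rfl fun m _ => ?_
    rw [← hRM m]
    simp [Matrix.mul_apply, Matrix.conjTranspose_apply]
  rw [← key]
  exact Matrix.posSemidef_conjTranspose_mul_self W

variable {d n : ℕ}

lemma Flip_herm : (Flip d)ᴴ = Flip d := by
  ext p q
  simp only [Matrix.conjTranspose_apply, Flip, Matrix.of_apply]
  by_cases h : p.1 = q.2 ∧ p.2 = q.1
  · rw [if_pos h, if_pos ⟨h.2.symm, h.1.symm⟩]; simp
  · rw [if_neg h, if_neg (fun hc => h ⟨hc.2.symm, hc.1.symm⟩)]; simp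

lemma Flip_mul_Flip : Flip d * Flip d = 1 := by
  ext p q
  simp only [Matrix.mul_apply, Flip, Matrix.of_apply, Matrix.one_apply]
  rw [Finset.sum_eq_single (p.2, p.1)]
  · simp [Prod.ext_iff, eq_comm, and_comm]
  · intro r _ hr
    rw [if_neg]
    · simp
    · rintro ⟨h1, h2⟩
      exact hr (by cases r; simp_all [Prod.ext_iff])
  · intro h; exact absurd (Finset.mem_univ _) h

lemma Phi_herm : (Phi d)ᴴ = Phi d := by
  ext p q
  simp only [Matrix.conjTranspose_apply, Phi, Matrix.of_apply, and_comm]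
  split_ifs <;> simp [Complex.conj_ofReal]

lemma Phi_mul_Phi (hd : (d : ℂ) ≠ 0) : Phi d * Phi d = Phi d := by
  ext p q
  simp only [Matrix.mul_apply, Phi, Matrix.of_apply]
  rw [Fintype.sum_prod_type]
  simp only [ite_and]
  by_cases hp : p.1 = p.2 <;> by_cases hq : q.1 = q.2 <;>
    simp [hp, hq, Finset.sum_ite_eq, Finset.mul_sum, ← Finset.sum_mul, mul_comm]
  · field_simp

lemma Phi_psd (hd : (d : ℂ) ≠ 0) : (Phi d).PosSemidef := by
  have h : Phi d = (Phi d)ᴴ * Phi d := by rw [Phi_herm, Phi_mul_Phi hd]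
  rw [h]
  exact Matrix.posSemidef_conjTranspose_mul_self _

lemma one_sub_Phi_psd (hd : (d : ℂ) ≠ 0) :
    ((1 : Matrix (Fin d × Fin d) (Fin d × Fin d) ℂ) - Phi d).PosSemidef := by
  have h : (1 - Phi d) = (1 - Phi d)ᴴ * (1 - Phi d) := by
    rw [Matrix.conjTranspose_sub, Matrix.conjTranspose_one, Phi_herm]
    rw [Matrix.sub_mul, Matrix.mul_sub, Matrix.mul_sub, Phi_mul_Phi hd]
    simp
  rw [h]
  exact Matrix.posSemidef_conjTranspose_mul_self _

lemma projAsym_herm : (projAsym d)ᴴ = projAsym d := by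
  unfold projAsym
  rw [Matrix.conjTranspose_smul, Matrix.conjTranspose_sub, Matrix.conjTranspose_one, Flip_herm]
  congr 1
  simp

lemma projAsym_idem : projAsym d * projAsym d = projAsym d := by
  unfold projAsym
  rw [Matrix.smul_mul, Matrix.mul_smul, Matrix.sub_mul, Matrix.mul_sub, Matrix.mul_sub,
    Flip_mul_Flip]
  rw [smul_smul]
  ext p q
  simp only [Matrix.smul_apply, Matrix.sub_apply, Matrix.one_mul, Matrix.mul_one, smul_eq_mul]
  ring

lemma wernerAsym_psd (hd : 2 ≤ d) : (wernerAsym d).PosSemidef := by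
  have h1 : (1:ℝ) ≤ (d:ℝ) := by exact_mod_cast (by omega : 1 ≤ d)
  have hc : (0:ℝ) ≤ 2 / ((d:ℝ) * ((d:ℝ) - 1)) :=
    div_nonneg (by norm_num) (mul_nonneg (by linarith) (by linarith))
  set s : ℝ := Real.sqrt (2 / ((d:ℝ) * ((d:ℝ) - 1))) with hs
  have key : wernerAsym d = ((s:ℂ) • projAsym d)ᴴ * ((s:ℂ) • projAsym d) := by
    rw [Matrix.conjTranspose_smul, projAsym_herm, Matrix.smul_mul, Matrix.mul_smul,
      projAsym_idem, smul_smul]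
    unfold wernerAsym
    congr 1
    rw [Complex.star_def, Complex.conj_ofReal, ← Complex.ofReal_mul, hs,
      Real.mul_self_sqrt hc]
    push_cast
    ring
  rw [key]
  exact Matrix.posSemidef_conjTranspose_mul_self _

lemma pt_entry_aux {p q : Fin d × Fin d} :
    (((p.1, q.2) : Fin d × Fin d) = (q.1, p.2)) ↔ p = q := by
  constructor
  · intro h
    have h' := Prod.ext_iff.mp h
    exact Prod.ext h'.1 h'.2.symm
  · intro h; subst h; rfl

lemma pt_wernerSym (hd : 2 ≤ d) :
    pt (wernerSym d) = (((d:ℂ) * ((d:ℂ) + 1))⁻¹) • (1 + (d:ℂ) • Phi d) := by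
  have hd0 : (d:ℂ) ≠ 0 := Nat.cast_ne_zero.mpr (by omega)
  ext p q
  simp only [pt, wernerSym, projSym, Flip, Phi, Matrix.of_apply, Matrix.smul_apply,
    Matrix.add_apply, Matrix.one_apply, smul_eq_mul]
  rw [if_congr (pt_entry_aux (p := p) (q := q)) rfl rfl]
  have hsymm : (p.1 = p.2 ∧ q.2 = q.1) ↔ (p.1 = p.2 ∧ q.1 = q.2) := by
    constructor <;> (rintro ⟨a,b⟩; exact ⟨a, b.symm⟩)
  rw [if_congr hsymm rfl rfl]
  split_ifs <;> field_simp <;> ring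

lemma pt_wernerAsym (hd : 2 ≤ d) :
    pt (wernerAsym d) = (((d:ℂ) * ((d:ℂ) - 1))⁻¹) • (1 - (d:ℂ) • Phi d) := by
  have hd0 : (d:ℂ) ≠ 0 := Nat.cast_ne_zero.mpr (by omega)
  have hd1 : (d:ℂ) - 1 ≠ 0 := by
    intro h
    have h2 : (d:ℂ) = 1 := by linear_combination h
    have h3 : d = 1 := by exact_mod_cast h2
    omega
  ext p q
  simp only [pt, wernerAsym, projAsym, Flip, Phi, Matrix.of_apply, Matrix.smul_apply,
    Matrix.sub_apply, Matrix.one_apply, smul_eq_mul]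
  rw [if_congr (pt_entry_aux (p := p) (q := q)) rfl rfl]
  have hsymm : (p.1 = p.2 ∧ q.2 = q.1) ↔ (p.1 = p.2 ∧ q.1 = q.2) := by
    constructor <;> (rintro ⟨a,b⟩; exact ⟨a, b.symm⟩)
  rw [if_congr hsymm rfl rfl]
  split_ifs <;> field_simp <;> ring

lemma ptN_tpow (X : Matrix (Fin d × Fin d) (Fin d × Fin d) ℂ) :
    ptN (tpow n X) = tpow n (pt X) := rfl

lemma ptN_linear (a b : ℂ) (X Y : Matrix (Fin n → Fin d × Fin d) (Fin n → Fin d × Fin d) ℂ) :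
    ptN (a • X - b • Y) = a • ptN X - b • ptN Y := rfl

lemma trace_ptN_mul (X Y : Matrix (Fin n → Fin d × Fin d) (Fin n → Fin d × Fin d) ℂ) :
    (ptN X * ptN Y).trace = (X * Y).trace := by
  have tr : ∀ A B : Matrix (Fin n → Fin d × Fin d) (Fin n → Fin d × Fin d) ℂ,
      (A * B).trace = ∑ p : (Fin n → Fin d × Fin d) × (Fin n → Fin d × Fin d),
        A p.1 p.2 * B p.2 p.1 := by
    intro A B
    rw [Fintype.sum_prod_type]
    simp [Matrix.trace, Matrix.mul_apply, Matrix.diag]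
  rw [tr, tr]
  have hinv : Function.Involutive
      (fun p : (Fin n → Fin d × Fin d) × (Fin n → Fin d × Fin d) =>
        ((fun m => ((p.1 m).1, (p.2 m).2)), (fun m => ((p.2 m).1, (p.1 m).2)))) := by
    intro p
    simp
  exact Fintype.sum_equiv hinv.toPerm _ _ (fun p => rfl)

lemma trace_tpow (X : Matrix (Fin d × Fin d) (Fin d × Fin d) ℂ) :
    (tpow n X).trace = X.trace ^ n := by
  have h := Finset.prod_univ_sum (fun _ : Fin n => (Finset.univ : Finset (Fin d × Fin d)))
    (fun _ a => X a a)
  rw [Fintype.piFinset_univ] at h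
  simp only [Matrix.trace, Matrix.diag, tpow, Matrix.of_apply]
  rw [← h, Finset.prod_const, Finset.card_univ, Fintype.card_fin]

lemma trace_wernerAsym (hd : 2 ≤ d) : (wernerAsym d).trace = 1 := by
  have hd0 : (d:ℂ) ≠ 0 := Nat.cast_ne_zero.mpr (by omega)
  have hd1 : (d:ℂ) - 1 ≠ 0 := by
    intro h
    have h2 : (d:ℂ) = 1 := by linear_combination h
    have h3 : d = 1 := by exact_mod_cast h2
    omega
  have htrF : (Flip d).trace = (d : ℂ) := by
    simp only [Matrix.trace, Matrix.diag, Flip, Matrix.of_apply]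
    have hc : ∀ p : Fin d × Fin d, ((p.1 = p.2 ∧ p.2 = p.1) ↔ p.1 = p.2) :=
      fun p => ⟨fun h => h.1, fun h => ⟨h, h.symm⟩⟩
    rw [Finset.sum_congr rfl (fun p _ => if_congr (hc p) rfl rfl), Fintype.sum_prod_type]
    simp [Finset.sum_ite_eq]
  have htr1 : (1 : Matrix (Fin d × Fin d) (Fin d × Fin d) ℂ).trace = ((d:ℂ) * d) := by
    rw [Matrix.trace_one]
    simp [mul_comm]
  unfold wernerAsym projAsym
  rw [Matrix.trace_smul, Matrix.trace_smul, Matrix.trace_sub, htrF, htr1]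
  have hdd : (d:ℂ) * ((d:ℂ) - 1) ≠ 0 := mul_ne_zero hd0 hd1
  field_simp
  rw [smul_eq_mul, smul_eq_mul, show (2:ℂ) / ((d:ℂ) * ((d:ℂ) - 1)) * (1 / 2 * ((d:ℂ) * ((d:ℂ) - 1)))
      = ((d:ℂ) * ((d:ℂ) - 1)) * ((d:ℂ) * ((d:ℂ) - 1))⁻¹ by ring]
  exact mul_inv_cancel₀ hdd

lemma Z_decomp (hd : 2 ≤ d) (a b : ℝ) :
    ptN ((a:ℂ) • tpow n (wernerSym d) - (b:ℂ) • tpow n (wernerAsym d)) =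
      ∑ S ∈ (Finset.univ : Finset (Fin n)).powerset,
        ((↑(a * (1+(d:ℝ))^S.card / ((d:ℝ)*((d:ℝ)+1))^n
            - b * (1-(d:ℝ))^S.card / ((d:ℝ)*((d:ℝ)-1))^n) : ℂ) •
          Matrix.of (fun f g : Fin n → Fin d × Fin d =>
            ∏ m, (if m ∈ S then Phi d else (1 - Phi d)) (f m) (g m))) := by
  have hd0 : (d:ℂ) ≠ 0 := Nat.cast_ne_zero.mpr (by omega)
  have hdp : (d:ℂ) + 1 ≠ 0 := by
    intro h
    have h2 : (d:ℂ) = -1 := by linear_combination h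
    have h3 : ((d:ℝ) : ℂ) = ((-1 : ℝ) : ℂ) := by push_cast; exact h2
    have h4 : (d:ℝ) = -1 := Complex.ofReal_injective h3
    have h5 : (0:ℝ) ≤ (d:ℝ) := Nat.cast_nonneg d
    linarith
  have hdm : (d:ℂ) - 1 ≠ 0 := by
    intro h
    have h2 : (d:ℂ) = 1 := by linear_combination h
    have h3 : d = 1 := by exact_mod_cast h2
    omega
  rw [ptN_linear, ptN_tpow, ptN_tpow, pt_wernerSym hd, pt_wernerAsym hd]
  ext f g
  have hplus : ∀ u v : Fin d × Fin d,
      (1 : Matrix (Fin d × Fin d) (Fin d × Fin d) ℂ) u v + (d:ℂ) * Phi d u v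
        = (1+(d:ℂ)) * Phi d u v + ((1 : Matrix (Fin d × Fin d) (Fin d × Fin d) ℂ) - Phi d) u v := by
    intro u v
    simp only [Matrix.sub_apply]
    ring
  have hminus : ∀ u v : Fin d × Fin d,
      (1 : Matrix (Fin d × Fin d) (Fin d × Fin d) ℂ) u v - (d:ℂ) * Phi d u v
        = (1-(d:ℂ)) * Phi d u v + ((1 : Matrix (Fin d × Fin d) (Fin d × Fin d) ℂ) - Phi d) u v := by
    intro u v
    simp only [Matrix.sub_apply]
    ring
  simp only [Matrix.sub_apply, Matrix.smul_apply, Matrix.sum_apply, Matrix.of_apply, tpow,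
    Matrix.add_apply, smul_eq_mul]
  simp only [hplus, hminus]
  simp only [Finset.prod_mul_distrib, Finset.prod_const, Finset.card_univ, Fintype.card_fin]
  rw [Finset.prod_add, Finset.prod_add]
  simp only [Finset.prod_mul_distrib, Finset.prod_const]
  simp only [Finset.mul_sum]
  rw [← Finset.sum_sub_distrib]
  refine Finset.sum_congr rfl fun S _ => ?_
  have hsplit : ∏ m, (if m ∈ S then Phi d else (1 - Phi d)) (f m) (g m)
      = (∏ m ∈ S, Phi d (f m) (g m)) * ∏ m ∈ Finset.univ \ S, (1 - Phi d) (f m) (g m) := by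
    rw [← Finset.prod_sdiff (Finset.subset_univ S), mul_comm]
    congr 1
    · exact Finset.prod_congr rfl fun m hm => by rw [if_pos hm]
    · exact Finset.prod_congr rfl fun m hm => by
        rw [if_neg (Finset.mem_sdiff.mp hm).2]
  rw [hsplit]
  have hcoef : ((↑(a * (1+(d:ℝ))^S.card / ((d:ℝ)*((d:ℝ)+1))^n
      - b * (1-(d:ℝ))^S.card / ((d:ℝ)*((d:ℝ)-1))^n) : ℂ))
      = (a:ℂ) * (((d:ℂ) * ((d:ℂ) + 1))⁻¹)^n * (1+(d:ℂ))^S.card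
        - (b:ℂ) * (((d:ℂ) * ((d:ℂ) - 1))⁻¹)^n * (1-(d:ℂ))^S.card := by
    push_cast
    rw [inv_pow, inv_pow]
    rw [div_eq_mul_inv, div_eq_mul_inv]
    ring
  rw [hcoef]
  ring

end Aux


/-- lower bound on the error probability of any PPT POVM element. -/
theorem ppt_error_lower_bound (d : ℕ) (hd : 2 ≤ d) (n : ℕ) (p : ℝ)
    (hp0 : 0 ≤ p) (hp1 : p ≤ 1)
    (E : Matrix (Fin n → Fin d × Fin d) (Fin n → Fin d × Fin d) ℂ)
    (hE : IsPPTPovmElem E) :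
    ((p : ℂ) * (E * tpow n (wernerSym d)).trace
        + (1 - (p : ℂ)) * ((1 - E) * tpow n (wernerAsym d)).trace).re
      ≥ min (p * (((d : ℝ) - 1) / ((d : ℝ) + 1)) ^ n) (1 - p) := by
  classical
  have hD : (2:ℝ) ≤ (d:ℝ) := by exact_mod_cast hd
  have hD0 : (0:ℝ) < (d:ℝ) := by linarith
  have hD1 : (0:ℝ) < (d:ℝ) - 1 := by linarith
  have hDp : (0:ℝ) < (d:ℝ) + 1 := by linarith
  have hdC0 : (d:ℂ) ≠ 0 := Nat.cast_ne_zero.mpr (by omega)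
  set r : ℝ := (((d:ℝ) - 1) / ((d:ℝ) + 1)) ^ n with hrdef
  set lam : ℝ := min (p * r) (1 - p) with hlamdef
  have hr0 : 0 ≤ r := pow_nonneg (div_nonneg (by linarith) (by linarith)) n
  have hlam0 : 0 ≤ lam := le_min (mul_nonneg hp0 hr0) (by linarith)
  have hlam1 : lam ≤ 1 - p := min_le_right _ _
  have hlamr : lam ≤ p * r := min_le_left _ _
  -- positivity of the relevant matrices
  have hαpsd : (tpow n (wernerAsym d)).PosSemidef := by
    have := tpow_family_psd (fun _ : Fin n => wernerAsym d) (fun _ => wernerAsym_psd hd)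
    exact this
  have hE2 : 0 ≤ ((1 - E) * tpow n (wernerAsym d)).trace.re :=
    psd_trace_mul_re_nonneg hE.2.1 hαpsd
  -- the key PSD matrix Z
  set Y : Matrix (Fin n → Fin d × Fin d) (Fin n → Fin d × Fin d) ℂ :=
    ((p:ℝ) : ℂ) • tpow n (wernerSym d) - ((lam:ℝ) : ℂ) • tpow n (wernerAsym d) with hYdef
  have hZpsd : (ptN Y).PosSemidef := by
    rw [hYdef, Z_decomp hd p lam]
    refine psd_sum _ _ fun S _ => ?_
    have hTpsd : (Matrix.of (fun f g : Fin n → Fin d × Fin d =>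
        ∏ m, (if m ∈ S then Phi d else (1 - Phi d)) (f m) (g m))).PosSemidef := by
      refine tpow_family_psd _ fun m => ?_
      by_cases hm : m ∈ S
      · rw [if_pos hm]; exact Phi_psd hdC0
      · rw [if_neg hm]; exact one_sub_Phi_psd hdC0
    refine psd_smul_real hTpsd ?_
    -- nonnegativity of the coefficient
    set k := S.card
    have habs : (1-(d:ℝ))^k ≤ ((d:ℝ)-1)^k := by
      calc (1-(d:ℝ))^k ≤ |(1-(d:ℝ))^k| := le_abs_self _
        _ = |1-(d:ℝ)|^k := by rw [abs_pow]
        _ = ((d:ℝ)-1)^k := by rw [abs_sub_comm, abs_of_pos hD1]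
    have hpos1 : (0:ℝ) < ((d:ℝ)*((d:ℝ)-1))^n := pow_pos (by nlinarith) n
    have hpos2 : (0:ℝ) < ((d:ℝ)*((d:ℝ)+1))^n := pow_pos (by nlinarith) n
    have h1 : lam * (1-(d:ℝ))^k ≤ p * r * ((d:ℝ)-1)^k := by
      calc lam * (1-(d:ℝ))^k ≤ lam * ((d:ℝ)-1)^k :=
            mul_le_mul_of_nonneg_left habs hlam0
        _ ≤ p * r * ((d:ℝ)-1)^k :=
            mul_le_mul_of_nonneg_right hlamr (pow_nonneg (by linarith) k)
    have heq1 : p * r * ((d:ℝ)-1)^k / ((d:ℝ)*((d:ℝ)-1))^n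
        = p * ((d:ℝ)-1)^k / ((d:ℝ)^n*((d:ℝ)+1)^n) := by
      rw [hrdef, div_pow, mul_pow]
      field_simp
    have heq2 : p * (1+(d:ℝ))^k / ((d:ℝ)*((d:ℝ)+1))^n
        = p * ((d:ℝ)+1)^k / ((d:ℝ)^n*((d:ℝ)+1)^n) := by
      rw [mul_pow, show (1+(d:ℝ)) = ((d:ℝ)+1) by ring]
    have h2 : p * ((d:ℝ)-1)^k ≤ p * ((d:ℝ)+1)^k :=
      mul_le_mul_of_nonneg_left (pow_le_pow_left₀ (by linarith) (by linarith) k) hp0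
    have hchain : lam * (1-(d:ℝ))^k / ((d:ℝ)*((d:ℝ)-1))^n
        ≤ p * (1+(d:ℝ))^k / ((d:ℝ)*((d:ℝ)+1))^n := by
      calc lam * (1-(d:ℝ))^k / ((d:ℝ)*((d:ℝ)-1))^n
          ≤ p * r * ((d:ℝ)-1)^k / ((d:ℝ)*((d:ℝ)-1))^n := by
            exact div_le_div_of_nonneg_right h1 hpos1.le
        _ = p * ((d:ℝ)-1)^k / ((d:ℝ)^n*((d:ℝ)+1)^n) := heq1
        _ ≤ p * ((d:ℝ)+1)^k / ((d:ℝ)^n*((d:ℝ)+1)^n) := by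
            apply div_le_div_of_nonneg_right h2
            positivity
        _ = p * (1+(d:ℝ))^k / ((d:ℝ)*((d:ℝ)+1))^n := heq2.symm
    linarith
  -- trace identities
  have htrY : (E * Y).trace
      = ((p:ℝ):ℂ) * (E * tpow n (wernerSym d)).trace
        - ((lam:ℝ):ℂ) * (E * tpow n (wernerAsym d)).trace := by
    rw [hYdef, Matrix.mul_sub, Matrix.trace_sub, Matrix.mul_smul, Matrix.mul_smul,
      Matrix.trace_smul, Matrix.trace_smul, smul_eq_mul, smul_eq_mul]
  have hαtr : (tpow n (wernerAsym d)).trace = 1 := by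
    rw [trace_tpow, trace_wernerAsym hd, one_pow]
  have hE2eq : ((1 - E) * tpow n (wernerAsym d)).trace
      = 1 - (E * tpow n (wernerAsym d)).trace := by
    rw [Matrix.sub_mul, Matrix.one_mul, Matrix.trace_sub, hαtr]
  -- combine
  have hsum : ((p:ℝ):ℂ) * (E * tpow n (wernerSym d)).trace
      + ((lam:ℝ):ℂ) * ((1 - E) * tpow n (wernerAsym d)).trace
      = (E * Y).trace + ((lam:ℝ):ℂ) := by
    rw [htrY, hE2eq]
    ring
  have htr0 : 0 ≤ (E * Y).trace.re := by
    rw [← trace_ptN_mul E Y]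
    exact psd_trace_mul_re_nonneg hE.2.2.1 hZpsd
  -- pass to real parts
  have hre : ∀ (c : ℝ) (z : ℂ), ((c:ℂ) * z).re = c * z.re := by
    intro c z
    simp [Complex.mul_re]
  have hsumre : p * (E * tpow n (wernerSym d)).trace.re
      + lam * ((1 - E) * tpow n (wernerAsym d)).trace.re
      = (E * Y).trace.re + lam := by
    have := congrArg Complex.re hsum
    simpa [Complex.add_re, hre] using this
  have hlhs : ((p : ℂ) * (E * tpow n (wernerSym d)).trace
      + (1 - (p : ℂ)) * ((1 - E) * tpow n (wernerAsym d)).trace).re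
      = p * (E * tpow n (wernerSym d)).trace.re
        + (1-p) * ((1 - E) * tpow n (wernerAsym d)).trace.re := by
    have h1p : (1 - (p:ℂ)) = (((1-p : ℝ)):ℂ) := by push_cast; ring
    rw [h1p, Complex.add_re, hre, hre]
  rw [ge_iff_le, hlhs]
  have hstep : lam * ((1 - E) * tpow n (wernerAsym d)).trace.re
      ≤ (1-p) * ((1 - E) * tpow n (wernerAsym d)).trace.re :=
    mul_le_mul_of_nonneg_right hlam1 hE2
  linarith

end
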